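/- Let $A$ be a C*-algebra, let $K \subseteq \mathbb{C}$ be compact, and let $f : K \to \mathbb{C}$ be continuous. Let $S$ be the set of normal elements $x$ of the multiplier algebra $M(A)$ with spectrum contained in $K$. Then the functional calculus map $x \mapsto f(x)$ from $S$ to $M(A)$ is continuous with respect to the strict topology: if a net $(x_i)$ in $S$ converges strictly to $x \in S$, then $f(x_i) \to f(x)$ strictly. -/

import Mathlib

open Filter Topology

open scoped MultiplierAlgebra

/-- A net in the multiplier algebra `M(A)` converges strictly to `y` if multiplication against
every element of `A` converges in norm on both sides. -/
def StrictTendsto {A : Type*} [NonUnitalCStarAlgebra A] {ι : Type*} (l : Filter ι)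
    (x : ι → 𝓜(ℂ, A)) (y : 𝓜(ℂ, A)) : Prop :=
  ∀ a : A, Tendsto (fun i => x i * (a : 𝓜(ℂ, A))) l (𝓝 (y * (a : 𝓜(ℂ, A)))) ∧
    Tendsto (fun i => (a : 𝓜(ℂ, A)) * x i) l (𝓝 ((a : 𝓜(ℂ, A)) * y))

section Aux

variable {A : Type*} [NonUnitalCStarAlgebra A] {ι : Type*} {l : Filter ι}

private lemma eq_of_forall_mul_left' {u v : A} (h : ∀ z : A, z * u = z * v) : u = v := by
  have h0 : star (u - v) * (u - v) = 0 := by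
    rw [mul_sub, h (star (u - v)), sub_self]
  exact sub_eq_zero.mp ((CStarRing.star_mul_self_eq_zero_iff _).mp h0)

private lemma eq_of_forall_mul_right' {u v : A} (h : ∀ z : A, u * z = v * z) : u = v := by
  have h0 : (u - v) * star (u - v) = 0 := by
    rw [sub_mul, h (star (u - v)), sub_self]
  exact sub_eq_zero.mp ((CStarRing.mul_star_self_eq_zero_iff _).mp h0)

private lemma mul_coe_eq' (m : 𝓜(ℂ, A)) (a : A) :
    m * (a : 𝓜(ℂ, A)) = ((m.fst a : A) : 𝓜(ℂ, A)) := by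
  refine DoubleCentralizer.ext _ _ _ _ (Prod.ext ?_ ?_)
  · refine ContinuousLinearMap.ext fun b => ?_
    show (m * (a : 𝓜(ℂ, A))).fst b = ((m.fst a : A) : 𝓜(ℂ, A)).fst b
    rw [DoubleCentralizer.mul_fst, ContinuousLinearMap.mul_apply,
      DoubleCentralizer.coe_fst, DoubleCentralizer.coe_fst,
      ContinuousLinearMap.mul_apply', ContinuousLinearMap.mul_apply']
    refine eq_of_forall_mul_left' fun z => ?_
    rw [← m.central z (a * b), ← mul_assoc, m.central z a, ← mul_assoc]
  · refine ContinuousLinearMap.ext fun b => ?_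
    show (m * (a : 𝓜(ℂ, A))).snd b = ((m.fst a : A) : 𝓜(ℂ, A)).snd b
    rw [DoubleCentralizer.mul_snd, ContinuousLinearMap.mul_apply,
      DoubleCentralizer.coe_snd, DoubleCentralizer.coe_snd]
    show m.snd b * a = b * m.fst a
    exact m.central b a

private lemma coe_mul_eq' (a : A) (m : 𝓜(ℂ, A)) :
    (a : 𝓜(ℂ, A)) * m = ((m.snd a : A) : 𝓜(ℂ, A)) := by
  refine DoubleCentralizer.ext _ _ _ _ (Prod.ext ?_ ?_)
  · refine ContinuousLinearMap.ext fun b => ?_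
    show ((a : 𝓜(ℂ, A)) * m).fst b = ((m.snd a : A) : 𝓜(ℂ, A)).fst b
    rw [DoubleCentralizer.mul_fst, ContinuousLinearMap.mul_apply,
      DoubleCentralizer.coe_fst, DoubleCentralizer.coe_fst]
    show a * m.fst b = m.snd a * b
    exact (m.central a b).symm
  · refine ContinuousLinearMap.ext fun b => ?_
    show ((a : 𝓜(ℂ, A)) * m).snd b = ((m.snd a : A) : 𝓜(ℂ, A)).snd b
    rw [DoubleCentralizer.mul_snd, ContinuousLinearMap.mul_apply,
      DoubleCentralizer.coe_snd, DoubleCentralizer.coe_snd]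
    show m.snd (b * a) = b * m.snd a
    refine eq_of_forall_mul_right' fun w => ?_
    rw [m.central (b * a) w, mul_assoc, ← m.central a w, ← mul_assoc]

private lemma coe_star' (a : A) : ((star a : A) : 𝓜(ℂ, A)) = star (a : 𝓜(ℂ, A)) :=
  map_star (DoubleCentralizer.coeHom (𝕜 := ℂ) (A := A)) a

private lemma strictTendsto_const (m : 𝓜(ℂ, A)) : StrictTendsto l (fun _ => m) m :=
  fun _ => ⟨tendsto_const_nhds, tendsto_const_nhds⟩

private lemma strictTendsto_add {u v : ι → 𝓜(ℂ, A)} {u' v' : 𝓜(ℂ, A)}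
    (hu : StrictTendsto l u u') (hv : StrictTendsto l v v') :
    StrictTendsto l (fun i => u i + v i) (u' + v') := by
  intro a
  constructor
  · simpa only [add_mul] using ((hu a).1.add (hv a).1)
  · simpa only [mul_add] using ((hu a).2.add (hv a).2)

private lemma strictTendsto_star {u : ι → 𝓜(ℂ, A)} {u' : 𝓜(ℂ, A)}
    (hu : StrictTendsto l u u') :
    StrictTendsto l (fun i => star (u i)) (star u') := by
  intro a
  have key : ∀ m : 𝓜(ℂ, A), star m * (a : 𝓜(ℂ, A)) = star (((star a : A) : 𝓜(ℂ, A)) * m) := by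
    intro m
    rw [star_mul, coe_star', star_star]
  have key2 : ∀ m : 𝓜(ℂ, A), (a : 𝓜(ℂ, A)) * star m = star (m * ((star a : A) : 𝓜(ℂ, A))) := by
    intro m
    rw [star_mul, coe_star', star_star]
  constructor
  · simp only [key]
    exact ((hu (star a)).2).star
  · simp only [key2]
    exact ((hu (star a)).1).star

private lemma strictTendsto_mul {u v : ι → 𝓜(ℂ, A)} {u' v' : 𝓜(ℂ, A)} {C D : ℝ}
    (hu : StrictTendsto l u u') (hv : StrictTendsto l v v')
    (hC : ∀ i, ‖u i‖ ≤ C) (hD : ∀ i, ‖v i‖ ≤ D) :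
    StrictTendsto l (fun i => u i * v i) (u' * v') := by
  intro a
  constructor
  · have h1 : Tendsto (fun i => u i * (v i * (a : 𝓜(ℂ, A))) - u i * (v' * (a : 𝓜(ℂ, A)))) l
        (𝓝 0) := by
      have hnorm : Tendsto (fun i => C * ‖v i * (a : 𝓜(ℂ, A)) - v' * (a : 𝓜(ℂ, A))‖) l (𝓝 0) := by
        have := (tendsto_sub_nhds_zero_iff.2 (hv a).1).norm
        simpa using this.const_mul C
      refine squeeze_zero_norm (fun i => ?_) hnorm
      rw [← mul_sub]
      calc ‖u i * (v i * (a : 𝓜(ℂ, A)) - v' * (a : 𝓜(ℂ, A)))‖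
          ≤ ‖u i‖ * ‖v i * (a : 𝓜(ℂ, A)) - v' * (a : 𝓜(ℂ, A))‖ := norm_mul_le _ _
        _ ≤ C * ‖v i * (a : 𝓜(ℂ, A)) - v' * (a : 𝓜(ℂ, A))‖ :=
            mul_le_mul_of_nonneg_right (hC i) (norm_nonneg _)
    have h2 : Tendsto (fun i => u i * (v' * (a : 𝓜(ℂ, A)))) l (𝓝 (u' * (v' * (a : 𝓜(ℂ, A))))) := by
      rw [mul_coe_eq' v' a]
      exact (hu _).1
    have h3 := h1.add h2
    rw [zero_add] at h3
    have h4 : (fun i => u i * (v i * (a : 𝓜(ℂ, A))) - u i * (v' * (a : 𝓜(ℂ, A)))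
        + u i * (v' * (a : 𝓜(ℂ, A)))) = fun i => u i * v i * (a : 𝓜(ℂ, A)) := by
      funext i
      rw [sub_add_cancel, mul_assoc]
    rw [h4] at h3
    rw [mul_assoc]
    exact h3
  · have h1 : Tendsto (fun i => (a : 𝓜(ℂ, A)) * u i * v i - (a : 𝓜(ℂ, A)) * u' * v i) l
        (𝓝 0) := by
      have hnorm : Tendsto (fun i => ‖(a : 𝓜(ℂ, A)) * u i - (a : 𝓜(ℂ, A)) * u'‖ * D) l (𝓝 0) := by
        have := (tendsto_sub_nhds_zero_iff.2 (hu a).2).norm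
        simpa using this.mul_const D
      refine squeeze_zero_norm (fun i => ?_) hnorm
      rw [← sub_mul]
      calc ‖((a : 𝓜(ℂ, A)) * u i - (a : 𝓜(ℂ, A)) * u') * v i‖
          ≤ ‖(a : 𝓜(ℂ, A)) * u i - (a : 𝓜(ℂ, A)) * u'‖ * ‖v i‖ := norm_mul_le _ _
        _ ≤ ‖(a : 𝓜(ℂ, A)) * u i - (a : 𝓜(ℂ, A)) * u'‖ * D :=
            mul_le_mul_of_nonneg_left (hD i) (norm_nonneg _)
    have h2 : Tendsto (fun i => ((a : 𝓜(ℂ, A)) * u') * v i) l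
        (𝓝 (((a : 𝓜(ℂ, A)) * u') * v')) := by
      rw [coe_mul_eq' a u']
      exact (hv _).2
    have h3 := h1.add h2
    rw [zero_add] at h3
    have h4 : (fun i => (a : 𝓜(ℂ, A)) * u i * v i - (a : 𝓜(ℂ, A)) * u' * v i
        + (a : 𝓜(ℂ, A)) * u' * v i) = fun i => (a : 𝓜(ℂ, A)) * (u i * v i) := by
      funext i
      rw [sub_add_cancel, mul_assoc]
    rw [h4] at h3
    rw [← mul_assoc]
    exact h3

end Aux

open scoped Classical in
/-- Extension by zero of a continuous function on `K` to all of `ℂ`. -/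
private noncomputable def extK (K : Set ℂ) (g : C(K, ℂ)) : ℂ → ℂ :=
  fun z => if h : z ∈ K then g ⟨z, h⟩ else 0

private lemma extK_apply (K : Set ℂ) (g : C(K, ℂ)) {z : ℂ} (hz : z ∈ K) :
    extK K g z = g ⟨z, hz⟩ := dif_pos hz

private lemma extK_continuousOn (K : Set ℂ) (g : C(K, ℂ)) : ContinuousOn (extK K g) K := by
  rw [continuousOn_iff_continuous_restrict]
  have h : K.restrict (extK K g) = g := funext fun z => dif_pos z.2
  rw [show K.domRestrict (extK K g) = g from h]
  exact g.continuous

private lemma norm_cfc_extK_le {A : Type*} [NonUnitalCStarAlgebra A] (K : Set ℂ) [CompactSpace K]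
    (g : C(K, ℂ)) (m : 𝓜(ℂ, A)) (hs : spectrum ℂ m ⊆ K) :
    ‖cfc (extK K g) m‖ ≤ ‖g‖ :=
  norm_cfc_le (norm_nonneg g) fun z hz => by
    rw [extK_apply K g (hs hz)]
    exact g.norm_coe_le_norm _

private lemma norm_cfc_extK_sub_le {A : Type*} [NonUnitalCStarAlgebra A] (K : Set ℂ)
    [CompactSpace K] (g h : C(K, ℂ)) (m : 𝓜(ℂ, A)) (hs : spectrum ℂ m ⊆ K) :
    ‖cfc (extK K g) m - cfc (extK K h) m‖ ≤ ‖g - h‖ := by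
  rw [← cfc_sub (extK K g) (extK K h) m ((extK_continuousOn K g).mono hs)
    ((extK_continuousOn K h).mono hs)]
  refine norm_cfc_le (norm_nonneg _) fun z hz => ?_
  rw [extK_apply K g (hs hz), extK_apply K h (hs hz)]
  exact (g - h).norm_coe_le_norm ⟨z, hs hz⟩

/-- For a compact set `K ⊆ ℂ` and `f` continuous on `K`, the functional calculus `x ↦ f(x)` is
strictly continuous on the set of normal multipliers with spectrum contained in `K`. -/
theorem stmt_3 {A : Type*} [NonUnitalCStarAlgebra A]
    (K : Set ℂ) (hK : IsCompact K) (f : ℂ → ℂ) (hf : ContinuousOn f K)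
    {ι : Type*} (l : Filter ι) (x : ι → 𝓜(ℂ, A)) (y : 𝓜(ℂ, A))
    (hxn : ∀ i, IsStarNormal (x i)) (hyn : IsStarNormal y)
    (hxK : ∀ i, spectrum ℂ (x i) ⊆ K) (hyK : spectrum ℂ y ⊆ K)
    (hconv : StrictTendsto l x y) :
    StrictTendsto l (fun i => cfc f (x i)) (cfc f y) := by
  haveI : CompactSpace K := isCompact_iff_compactSpace.mp hK
  have key : ∀ g : C(K, ℂ),
      StrictTendsto l (fun i => cfc (extK K g) (x i)) (cfc (extK K g) y) := by
    intro g
    induction g using ContinuousMap.induction_on_of_compact with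
    | const r =>
      have he : ∀ m : 𝓜(ℂ, A), IsStarNormal m → spectrum ℂ m ⊆ K →
          cfc (extK K (ContinuousMap.const K r)) m = algebraMap ℂ 𝓜(ℂ, A) r := by
        intro m hm hs
        rw [cfc_congr (g := fun _ : ℂ => r) fun z hz => by rw [extK_apply K _ (hs hz)]; rfl]
        exact cfc_const r m
      have hx' : (fun i => cfc (extK K (ContinuousMap.const K r)) (x i))
          = fun _ => algebraMap ℂ 𝓜(ℂ, A) r := funext fun i => he _ (hxn i) (hxK i)
      rw [hx', he y hyn hyK]
      exact strictTendsto_const _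
    | id =>
      have he : ∀ m : 𝓜(ℂ, A), IsStarNormal m → spectrum ℂ m ⊆ K →
          cfc (extK K (ContinuousMap.restrict K (ContinuousMap.id ℂ))) m = m := by
        intro m hm hs
        rw [cfc_congr (g := fun z : ℂ => z) fun z hz => by rw [extK_apply K _ (hs hz)]; rfl]
        exact cfc_id' ℂ m
      have hx' : (fun i => cfc (extK K (ContinuousMap.restrict K (ContinuousMap.id ℂ))) (x i))
          = x := funext fun i => he _ (hxn i) (hxK i)
      rw [hx', he y hyn hyK]
      exact hconv
    | star_id =>
      have he : ∀ m : 𝓜(ℂ, A), IsStarNormal m → spectrum ℂ m ⊆ K →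
          cfc (extK K (star (ContinuousMap.restrict K (ContinuousMap.id ℂ)))) m = star m := by
        intro m hm hs
        rw [cfc_congr (g := fun z : ℂ => star z) fun z hz => by rw [extK_apply K _ (hs hz)]; rfl]
        exact cfc_star_id m
      have hx' : (fun i =>
          cfc (extK K (star (ContinuousMap.restrict K (ContinuousMap.id ℂ)))) (x i))
          = fun i => star (x i) := funext fun i => he _ (hxn i) (hxK i)
      rw [hx', he y hyn hyK]
      exact strictTendsto_star hconv
    | add g₁ g₂ h₁ h₂ =>
      have he : ∀ m : 𝓜(ℂ, A), IsStarNormal m → spectrum ℂ m ⊆ K →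
          cfc (extK K (g₁ + g₂)) m = cfc (extK K g₁) m + cfc (extK K g₂) m := by
        intro m hm hs
        rw [cfc_congr (g := fun z : ℂ => extK K g₁ z + extK K g₂ z) fun z hz => by
          show extK K (g₁ + g₂) z = extK K g₁ z + extK K g₂ z
          rw [extK_apply K _ (hs hz), extK_apply K _ (hs hz), extK_apply K _ (hs hz)]; rfl]
        exact cfc_add m _ _ ((extK_continuousOn K g₁).mono hs) ((extK_continuousOn K g₂).mono hs)
      have hx' : (fun i => cfc (extK K (g₁ + g₂)) (x i))
          = fun i => cfc (extK K g₁) (x i) + cfc (extK K g₂) (x i) :=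
        funext fun i => he _ (hxn i) (hxK i)
      rw [hx', he y hyn hyK]
      exact strictTendsto_add h₁ h₂
    | mul g₁ g₂ h₁ h₂ =>
      have he : ∀ m : 𝓜(ℂ, A), IsStarNormal m → spectrum ℂ m ⊆ K →
          cfc (extK K (g₁ * g₂)) m = cfc (extK K g₁) m * cfc (extK K g₂) m := by
        intro m hm hs
        rw [cfc_congr (g := fun z : ℂ => extK K g₁ z * extK K g₂ z) fun z hz => by
          show extK K (g₁ * g₂) z = extK K g₁ z * extK K g₂ z
          rw [extK_apply K _ (hs hz), extK_apply K _ (hs hz), extK_apply K _ (hs hz)]; rfl]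
        exact cfc_mul _ _ m ((extK_continuousOn K g₁).mono hs) ((extK_continuousOn K g₂).mono hs)
      have hx' : (fun i => cfc (extK K (g₁ * g₂)) (x i))
          = fun i => cfc (extK K g₁) (x i) * cfc (extK K g₂) (x i) :=
        funext fun i => he _ (hxn i) (hxK i)
      rw [hx', he y hyn hyK]
      exact strictTendsto_mul h₁ h₂ (fun i => norm_cfc_extK_le K g₁ (x i) (hxK i))
        (fun i => norm_cfc_extK_le K g₂ (x i) (hxK i))
    | frequently g hg =>
      intro a
      have hest : ∀ (g' : C(K, ℂ)) (m : 𝓜(ℂ, A)), spectrum ℂ m ⊆ K →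
          ‖cfc (extK K g) m - cfc (extK K g') m‖ ≤ dist g g' := by
        intro g' m hs
        rw [dist_eq_norm]
        exact norm_cfc_extK_sub_le K g g' m hs
      constructor
      · rw [Metric.tendsto_nhds]
        intro ε hε
        set N := ‖(a : 𝓜(ℂ, A))‖ with hN
        have hN0 : (0 : ℝ) ≤ N := norm_nonneg _
        set δ := ε / 3 / (N + 1) with hδdef
        have hδ : 0 < δ := by positivity
        have hball : ∀ᶠ g' in 𝓝 g, dist g' g < δ := by
          filter_upwards [Metric.ball_mem_nhds g hδ] with g' hg' using hg'
        obtain ⟨g', hPg', hdist⟩ := (hg.and_eventually hball).exists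
        have hdist' : dist g g' < δ := by rwa [dist_comm] at hdist
        have hmid := Metric.tendsto_nhds.mp (hPg' a).1 (ε / 3) (by positivity)
        filter_upwards [hmid] with i hi
        have t1 : dist (cfc (extK K g) (x i) * (a : 𝓜(ℂ, A)))
            (cfc (extK K g') (x i) * (a : 𝓜(ℂ, A))) ≤ ε / 3 := by
          rw [dist_eq_norm, ← sub_mul]
          calc ‖(cfc (extK K g) (x i) - cfc (extK K g') (x i)) * (a : 𝓜(ℂ, A))‖
              ≤ ‖cfc (extK K g) (x i) - cfc (extK K g') (x i)‖ * N := norm_mul_le _ _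
            _ ≤ δ * N := mul_le_mul_of_nonneg_right
                ((hest g' (x i) (hxK i)).trans hdist'.le) hN0
            _ ≤ δ * (N + 1) := by nlinarith
            _ = ε / 3 := div_mul_cancel₀ _ (by positivity)
        have t3 : dist (cfc (extK K g') y * (a : 𝓜(ℂ, A)))
            (cfc (extK K g) y * (a : 𝓜(ℂ, A))) ≤ ε / 3 := by
          rw [dist_comm, dist_eq_norm, ← sub_mul]
          calc ‖(cfc (extK K g) y - cfc (extK K g') y) * (a : 𝓜(ℂ, A))‖
              ≤ ‖cfc (extK K g) y - cfc (extK K g') y‖ * N := norm_mul_le _ _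
            _ ≤ δ * N := mul_le_mul_of_nonneg_right ((hest g' y hyK).trans hdist'.le) hN0
            _ ≤ δ * (N + 1) := by nlinarith
            _ = ε / 3 := div_mul_cancel₀ _ (by positivity)
        have htri := dist_triangle4 (cfc (extK K g) (x i) * (a : 𝓜(ℂ, A)))
          (cfc (extK K g') (x i) * (a : 𝓜(ℂ, A))) (cfc (extK K g') y * (a : 𝓜(ℂ, A)))
          (cfc (extK K g) y * (a : 𝓜(ℂ, A)))
        linarith
      · rw [Metric.tendsto_nhds]
        intro ε hε
        set N := ‖(a : 𝓜(ℂ, A))‖ with hN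
        have hN0 : (0 : ℝ) ≤ N := norm_nonneg _
        set δ := ε / 3 / (N + 1) with hδdef
        have hδ : 0 < δ := by positivity
        have hball : ∀ᶠ g' in 𝓝 g, dist g' g < δ := by
          filter_upwards [Metric.ball_mem_nhds g hδ] with g' hg' using hg'
        obtain ⟨g', hPg', hdist⟩ := (hg.and_eventually hball).exists
        have hdist' : dist g g' < δ := by rwa [dist_comm] at hdist
        have hmid := Metric.tendsto_nhds.mp (hPg' a).2 (ε / 3) (by positivity)
        filter_upwards [hmid] with i hi
        have t1 : dist ((a : 𝓜(ℂ, A)) * cfc (extK K g) (x i))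
            ((a : 𝓜(ℂ, A)) * cfc (extK K g') (x i)) ≤ ε / 3 := by
          rw [dist_eq_norm, ← mul_sub]
          calc ‖(a : 𝓜(ℂ, A)) * (cfc (extK K g) (x i) - cfc (extK K g') (x i))‖
              ≤ N * ‖cfc (extK K g) (x i) - cfc (extK K g') (x i)‖ := norm_mul_le _ _
            _ ≤ N * δ := mul_le_mul_of_nonneg_left
                ((hest g' (x i) (hxK i)).trans hdist'.le) hN0
            _ = δ * N := mul_comm _ _
            _ ≤ δ * (N + 1) := by nlinarith
            _ = ε / 3 := div_mul_cancel₀ _ (by positivity)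
        have t3 : dist ((a : 𝓜(ℂ, A)) * cfc (extK K g') y)
            ((a : 𝓜(ℂ, A)) * cfc (extK K g) y) ≤ ε / 3 := by
          rw [dist_comm, dist_eq_norm, ← mul_sub]
          calc ‖(a : 𝓜(ℂ, A)) * (cfc (extK K g) y - cfc (extK K g') y)‖
              ≤ N * ‖cfc (extK K g) y - cfc (extK K g') y‖ := norm_mul_le _ _
            _ ≤ N * δ := mul_le_mul_of_nonneg_left ((hest g' y hyK).trans hdist'.le) hN0
            _ = δ * N := mul_comm _ _
            _ ≤ δ * (N + 1) := by nlinarith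
            _ = ε / 3 := div_mul_cancel₀ _ (by positivity)
        have htri := dist_triangle4 ((a : 𝓜(ℂ, A)) * cfc (extK K g) (x i))
          ((a : 𝓜(ℂ, A)) * cfc (extK K g') (x i)) ((a : 𝓜(ℂ, A)) * cfc (extK K g') y)
          ((a : 𝓜(ℂ, A)) * cfc (extK K g) y)
        linarith
  -- now conclude for `f` itself
  set f' : C(K, ℂ) := ⟨K.restrict f, continuousOn_iff_continuous_restrict.mp hf⟩ with hf'
  have he : ∀ m : 𝓜(ℂ, A), spectrum ℂ m ⊆ K → cfc (extK K f') m = cfc f m := by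
    intro m hs
    exact cfc_congr fun z hz => by rw [extK_apply K _ (hs hz)]; rfl
  have hx' : (fun i => cfc f (x i)) = fun i => cfc (extK K f') (x i) :=
    funext fun i => (he _ (hxK i)).symm
  rw [hx', ← he y hyK]
  exact key f'
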